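/- arXiv:1809.08220 — 6 statements merged into one kernel-verified Lean document; each statement's English description precedes it below -/
import Mathlib

section
/- Let G be a graph, let S be a subset of vertices of the complementary prism G∘Ḡ, and let v₁v₂…v_k be a path in G with k ≥ 2. If the convex hull (in the geodetic convexity of G∘Ḡ) of S contains v₁ together with the matched copies v̄₂, …, v̄_k in Ḡ, then it also contains v_k. -/
open SimpleGraph

/-- The complementary prism `G ∘ Ḡ`: left copies (`Sum.inl`) form `G`,
right copies (`Sum.inr`) form the complement `Gᶜ`, and each `inl v` is
matched to `inr v`. -/
def compPrism {V : Type*} (G : SimpleGraph V) : SimpleGraph (V ⊕ V) where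
  Adj x y :=
    match x, y with
    | Sum.inl a, Sum.inl b => G.Adj a b
    | Sum.inr a, Sum.inr b => Gᶜ.Adj a b
    | Sum.inl a, Sum.inr b => a = b
    | Sum.inr a, Sum.inl b => a = b
  symm := by
    constructor
    rintro (a | a) (b | b) h <;> simp_all [compl_adj, adj_comm, eq_comm]
  loopless := by
    constructor
    rintro (a | a) h <;> simp_all

/-- `v` lies on some shortest `u`-`w` path in `G`. -/
def inInterval {V : Type*} (G : SimpleGraph V) (u w v : V) : Prop :=
  ∃ p : G.Walk u w, p.IsPath ∧ p.length = G.dist u w ∧ v ∈ p.support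

/-- A set is geodesically convex if it contains every vertex on any shortest
path between two of its vertices. -/
def IsGeodConvex {V : Type*} (G : SimpleGraph V) (S : Set V) : Prop :=
  ∀ u ∈ S, ∀ w ∈ S, ∀ v, inInterval G u w v → v ∈ S

/-- The geodesic convex hull of a set of vertices. -/
def geodHull {V : Type*} (G : SimpleGraph V) (S : Set V) : Set V :=
  ⋂₀ {T | S ⊆ T ∧ IsGeodConvex G T}

/-- The convexity number: the maximum cardinality of a proper convex set. -/
noncomputable def convexityNumber {V : Type*} (G : SimpleGraph V) : ℕ :=
  sSup {n | ∃ S : Set V, IsGeodConvex G S ∧ S ≠ Set.univ ∧ S.ncard = n}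

lemma geodHull_convex {V : Type*} (G : SimpleGraph V) (S : Set V) :
    IsGeodConvex G (geodHull G S) := by
  intro u hu w hw x hx T hT
  exact hT.2 u (hu T hT) w (hw T hT) x hx

lemma step_lemma {V : Type*} (G : SimpleGraph V) (S : Set (V ⊕ V)) {a b : V}
    (hab : G.Adj a b)
    (ha : Sum.inl a ∈ geodHull (compPrism G) S)
    (hb : Sum.inr b ∈ geodHull (compPrism G) S) :
    Sum.inl b ∈ geodHull (compPrism G) S := by
  apply geodHull_convex (compPrism G) S _ ha _ hb
  have e1 : (compPrism G).Adj (Sum.inl a) (Sum.inl b) := hab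
  have e2 : (compPrism G).Adj (Sum.inl b) (Sum.inr b) := rfl
  set p : (compPrism G).Walk (Sum.inl a) (Sum.inr b) :=
    Walk.cons e1 (Walk.cons e2 Walk.nil) with hp
  have hdist : (compPrism G).dist (Sum.inl a) (Sum.inr b) = 2 := by
    have hle : (compPrism G).dist (Sum.inl a) (Sum.inr b) ≤ 2 := dist_le p
    have h0 : (compPrism G).dist (Sum.inl a) (Sum.inr b) ≠ 0 := by
      intro h
      rw [dist_eq_zero_iff_eq_or_not_reachable] at h
      rcases h with h | h
      · simp at h
      · exact h p.reachable
    have h1 : (compPrism G).dist (Sum.inl a) (Sum.inr b) ≠ 1 := by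
      intro h
      rw [dist_eq_one_iff_adj] at h
      exact hab.ne h
    omega
  refine ⟨p, ?_, by simp [hp, hdist], by simp [hp]⟩
  rw [Walk.isPath_def]
  simp [hp, Walk.support_cons]
  exact fun h => hab.ne h

theorem stmt0 {V : Type*} (G : SimpleGraph V) (S : Set (V ⊕ V)) (k : ℕ) (hk : 2 ≤ k)
    (v : Fin k → V) (hinj : Function.Injective v)
    (hpath : ∀ i : Fin k, ∀ h : i.val + 1 < k, G.Adj (v i) (v ⟨i.val + 1, h⟩))
    (h1 : Sum.inl (v ⟨0, by omega⟩) ∈ geodHull (compPrism G) S)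
    (h2 : ∀ i : Fin k, 1 ≤ i.val → Sum.inr (v i) ∈ geodHull (compPrism G) S) :
    Sum.inl (v ⟨k - 1, by omega⟩) ∈ geodHull (compPrism G) S := by
  have key : ∀ n, ∀ hn : n < k, Sum.inl (v ⟨n, hn⟩) ∈ geodHull (compPrism G) S := by
    intro n
    induction n with
    | zero => intro hn; exact h1
    | succ m ih =>
      intro hn
      have hm : m < k := by omega
      exact step_lemma G S (hpath ⟨m, hm⟩ hn) (ih hm) (h2 ⟨m + 1, hn⟩ (by simp))
  exact key (k - 1) (by omega)
end

section
/- Let G be a graph, let S be a convex set of the complementary prism G∘Ḡ in the geodetic convexity, and let S' = S ∩ V(Ḡ). If Ā denotes the open neighborhood of S' inside Ḡ (i.e., vertices of Ḡ \ S' adjacent in Ḡ to some vertex of S'), and A denotes the set of corresponding vertices in G, then S ∩ A = ∅. -/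
open SimpleGraph

theorem stmt4 {V : Type*} (G : SimpleGraph V) (S : Set (V ⊕ V))
    (hS : IsGeodConvex (compPrism G) S)
    (S' : Set V) (hS' : S' = {a | Sum.inr a ∈ S})
    (A : Set V) (hA : A = {a | a ∉ S' ∧ ∃ b ∈ S', Gᶜ.Adj b a}) :
    ∀ a ∈ A, Sum.inl a ∉ S := by
  subst hS' hA
  rintro a ⟨haS', b, hbS', hadj⟩ hinl
  -- the walk inl a — inr a — inr b is a shortest path
  have hab : a ≠ b := fun h => haS' (h ▸ hbS')
  have h1 : (compPrism G).Adj (Sum.inl a) (Sum.inr a) := rfl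
  have h2 : (compPrism G).Adj (Sum.inr a) (Sum.inr b) := hadj.symm
  let p : (compPrism G).Walk (Sum.inl a) (Sum.inr b) := .cons h1 (.cons h2 .nil)
  have hpath : p.IsPath := by
    simp [p, SimpleGraph.Walk.isPath_def, hab]
  have hne : (Sum.inl a : V ⊕ V) ≠ Sum.inr b := by simp
  have hnadj : ¬ (compPrism G).Adj (Sum.inl a) (Sum.inr b) := by
    intro h
    exact hab h
  have hle : (compPrism G).dist (Sum.inl a) (Sum.inr b) ≤ 2 :=
    SimpleGraph.dist_le p
  have hpos : 0 < (compPrism G).dist (Sum.inl a) (Sum.inr b) :=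
    SimpleGraph.Reachable.pos_dist_of_ne p.reachable hne
  have hneq1 : (compPrism G).dist (Sum.inl a) (Sum.inr b) ≠ 1 := by
    intro h
    exact hnadj (SimpleGraph.dist_eq_one_iff_adj.mp h)
  have hd : (compPrism G).dist (Sum.inl a) (Sum.inr b) = 2 := by omega
  have : Sum.inr a ∈ S := by
    apply hS _ hinl _ hbS' (Sum.inr a)
    exact ⟨p, hpath, by simp [p, hd], by simp [p]⟩
  exact haS' this
end

section
/- Let G be a graph of order n with diameter at most 2. Then the set V(G), viewed inside the complementary prism G∘Ḡ, is a convex set of G∘Ḡ in the geodetic convexity; consequently con(G∘Ḡ) ≥ n. -/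
open SimpleGraph

/-- The left-copy embedding as a graph homomorphism. -/
def inlHom {V : Type*} (G : SimpleGraph V) : G →g compPrism G :=
  ⟨Sum.inl, fun h => h⟩

theorem stmt5 {V : Type*} [Fintype V] (G : SimpleGraph V) (hconn : G.Connected)
    (hdiam : ∀ u v : V, G.dist u v ≤ 2) :
    IsGeodConvex (compPrism G) (Set.range Sum.inl) ∧
      Fintype.card V ≤ convexityNumber (compPrism G) := by
  have hconv : IsGeodConvex (compPrism G) (Set.range Sum.inl) := by
    rintro u ⟨a, rfl⟩ w ⟨b, rfl⟩ v ⟨p, hp, hlen, hv⟩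
    have hd2 : (compPrism G).dist (Sum.inl a) (Sum.inl b) ≤ 2 := by
      obtain ⟨q, hq⟩ := hconn.exists_walk_length_eq_dist a b
      calc (compPrism G).dist (Sum.inl a) (Sum.inl b) ≤ (q.map (inlHom G)).length :=
            SimpleGraph.dist_le _
        _ = G.dist a b := by rw [SimpleGraph.Walk.length_map, hq]
        _ ≤ 2 := hdiam a b
    have hplen : p.length ≤ 2 := hlen ▸ hd2
    cases p with
    | nil =>
      simp only [SimpleGraph.Walk.support_nil, List.mem_singleton] at hv
      exact ⟨a, hv.symm⟩
    | cons h1 q =>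
      cases q with
      | nil =>
        simp only [SimpleGraph.Walk.support_cons, SimpleGraph.Walk.support_nil, List.mem_cons, List.mem_singleton] at hv
        rcases hv with hv | hv | hv
        · exact ⟨a, hv.symm⟩
        · exact ⟨b, hv.symm⟩
        · simp at hv
      | cons h2 r =>
        cases r with
        | nil =>
          -- p = inl a :: x :: inl b
          rename_i x
          simp only [SimpleGraph.Walk.support_cons, SimpleGraph.Walk.support_nil, List.mem_cons, List.mem_singleton] at hv
          rcases hv with hv | hv | hv | hv
          · exact ⟨a, hv.symm⟩
          · -- v = x ; show x is a left vertex
            subst hv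
            cases v with
            | inl c => exact ⟨c, rfl⟩
            | inr c =>
              -- h1 : Adj (inl a) (inr c) hence a = c ; h2 : Adj (inr c) (inl b) hence c = b
              have hac : a = c := h1
              have hcb : c = b := h2
              subst hac; subst hcb
              -- then the path has repeated vertex inl a = inl b : contradiction with IsPath
              exfalso
              have := hp.support_nodup
              simp at this
          · exact ⟨b, hv.symm⟩
          · simp at hv
        | cons h3 r' =>
          exfalso
          simp only [SimpleGraph.Walk.length_cons] at hplen
          omega
  refine ⟨hconv, ?_⟩
  obtain ⟨v0⟩ := hconn.nonempty
  have hmem : Fintype.card V ∈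
      {n | ∃ S : Set (V ⊕ V), IsGeodConvex (compPrism G) S ∧ S ≠ Set.univ ∧ S.ncard = n} := by
    refine ⟨Set.range Sum.inl, hconv, ?_, ?_⟩
    · intro h
      have : (Sum.inr v0 : V ⊕ V) ∈ Set.range Sum.inl := h ▸ Set.mem_univ _
      obtain ⟨c, hc⟩ := this
      exact Sum.inl_ne_inr hc
    · rw [← Set.image_univ, Set.ncard_image_of_injective _ Sum.inl_injective,
        Set.ncard_univ, Nat.card_eq_fintype_card]
  refine le_csSup ⟨Fintype.card (V ⊕ V), ?_⟩ hmem
  rintro n ⟨S, -, -, rfl⟩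
  have := Set.ncard_le_ncard (Set.subset_univ S) Set.finite_univ
  simpa [Set.ncard_univ, Nat.card_eq_fintype_card] using this
end

section
/- Let G be a graph of order n whose diameter is not equal to 3 (G connected with diam(G) ≤ 2 or diam(G) ≥ 4, or G disconnected). Then the convexity number of the complementary prism G∘Ḡ is at least n. -/
open SimpleGraph

-- homs
def leftHom {V : Type*} (G : SimpleGraph V) : G →g compPrism G :=
  ⟨Sum.inl, fun h => h⟩

def rightHom {V : Type*} (G : SimpleGraph V) : Gᶜ →g compPrism G :=
  ⟨Sum.inr, fun h => h⟩

lemma left_dist_le {V : Type*} (G : SimpleGraph V) {u w : V} (h2 : G.edist u w ≤ 2) :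
    (compPrism G).dist (Sum.inl u) (Sum.inl w) ≤ 2 := by
  obtain ⟨p, hp⟩ := exists_walk_of_edist_ne_top (G := G) (u := u) (v := w)
    (by intro ht; rw [ht] at h2; exact (by simp at h2))
  have hlen : p.length ≤ 2 := by exact_mod_cast hp ▸ h2
  calc (compPrism G).dist (Sum.inl u) (Sum.inl w) ≤ (p.map (leftHom G)).length := dist_le _
    _ = p.length := Walk.length_map _ _
    _ ≤ 2 := hlen

lemma left_convex {V : Type*} (G : SimpleGraph V) (h2 : ∀ a b, G.edist a b ≤ 2) :
    IsGeodConvex (compPrism G) (Set.range Sum.inl) := by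
  rintro _ ⟨u, rfl⟩ _ ⟨w, rfl⟩ v ⟨p, hpath, hlen, hv⟩
  have hd : (compPrism G).dist (Sum.inl u) (Sum.inl w) ≤ 2 := left_dist_le G (h2 u w)
  have hl : p.length ≤ 2 := le_trans (le_of_eq hlen) hd
  cases p with
  | nil =>
    simp only [Walk.support_nil, List.mem_singleton] at hv
    exact hv ▸ ⟨u, rfl⟩
  | cons h1 q =>
    cases q with
    | nil =>
      simp only [Walk.support_cons, Walk.support_nil, List.mem_cons, List.mem_singleton,
        List.not_mem_nil, or_false] at hv
      rcases hv with rfl | rfl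
      · exact ⟨u, rfl⟩
      · exact ⟨w, rfl⟩
    | cons h2' r =>
      cases r with
      | cons h3 s =>
        simp only [Walk.length_cons] at hl
        omega
      | nil =>
        rename_i m
        cases m with
        | inl x =>
          simp only [Walk.support_cons, Walk.support_nil, List.mem_cons,
            List.mem_singleton, List.not_mem_nil, or_false] at hv
          rcases hv with rfl | rfl | rfl
          · exact ⟨u, rfl⟩
          · exact ⟨x, rfl⟩
          · exact ⟨w, rfl⟩
        | inr x =>
          have e1 : u = x := h1
          have e2 : x = w := h2'
          subst e1; subst e2
          rw [SimpleGraph.dist_self] at hlen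
          simp at hlen

lemma right_dist_le {V : Type*} (G : SimpleGraph V) {u w : V} (h2 : Gᶜ.edist u w ≤ 2) :
    (compPrism G).dist (Sum.inr u) (Sum.inr w) ≤ 2 := by
  obtain ⟨p, hp⟩ := exists_walk_of_edist_ne_top (G := Gᶜ) (u := u) (v := w)
    (by intro ht; rw [ht] at h2; exact (by simp at h2))
  have hlen : p.length ≤ 2 := by exact_mod_cast hp ▸ h2
  calc (compPrism G).dist (Sum.inr u) (Sum.inr w) ≤ (p.map (rightHom G)).length := dist_le _
    _ = p.length := Walk.length_map _ _
    _ ≤ 2 := hlen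

lemma right_convex {V : Type*} (G : SimpleGraph V) (h2 : ∀ a b, Gᶜ.edist a b ≤ 2) :
    IsGeodConvex (compPrism G) (Set.range Sum.inr) := by
  rintro _ ⟨u, rfl⟩ _ ⟨w, rfl⟩ v ⟨p, hpath, hlen, hv⟩
  have hd : (compPrism G).dist (Sum.inr u) (Sum.inr w) ≤ 2 := right_dist_le G (h2 u w)
  have hl : p.length ≤ 2 := le_trans (le_of_eq hlen) hd
  cases p with
  | nil =>
    simp only [Walk.support_nil, List.mem_singleton] at hv
    exact hv ▸ ⟨u, rfl⟩
  | cons h1 q =>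
    cases q with
    | nil =>
      simp only [Walk.support_cons, Walk.support_nil, List.mem_cons, List.mem_singleton,
        List.not_mem_nil, or_false] at hv
      rcases hv with rfl | rfl
      · exact ⟨u, rfl⟩
      · exact ⟨w, rfl⟩
    | cons h2' r =>
      cases r with
      | cons h3 s =>
        simp only [Walk.length_cons] at hl
        omega
      | nil =>
        rename_i m
        cases m with
        | inr x =>
          simp only [Walk.support_cons, Walk.support_nil, List.mem_cons,
            List.mem_singleton, List.not_mem_nil, or_false] at hv
          rcases hv with rfl | rfl | rfl
          · exact ⟨u, rfl⟩
          · exact ⟨x, rfl⟩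
          · exact ⟨w, rfl⟩
        | inl x =>
          have e1 : u = x := h1
          have e2 : x = w := h2'
          subst e1; subst e2
          rw [SimpleGraph.dist_self] at hlen
          simp at hlen

lemma compl_edist_le_two {V : Type*} (G : SimpleGraph V) {x y : V}
    (hxy : ¬ G.edist x y ≤ 3) : ∀ a b, Gᶜ.edist a b ≤ 2 := by
  classical
  have hclose : ∀ z t : V, (z = t ∨ G.Adj z t) → G.edist z t ≤ 1 := by
    rintro z t (rfl | hzt)
    · simp [edist_self]
    · exact le_of_eq (edist_eq_one_iff_adj.mpr hzt)
  have key : ∀ c : V, ¬((c = x ∨ G.Adj c x) ∧ (c = y ∨ G.Adj c y)) := by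
    rintro c ⟨hcx, hcy⟩
    apply hxy
    calc G.edist x y ≤ G.edist x c + G.edist c y := SimpleGraph.edist_triangle
      _ ≤ 1 + 1 := add_le_add (edist_comm ▸ hclose c x hcx) (hclose c y hcy)
      _ ≤ 3 := by norm_num
  intro a b
  by_cases hab : a = b
  · subst hab; simp [edist_self]
  by_cases hGc : Gᶜ.Adj a b
  · exact le_trans (le_of_eq (edist_eq_one_iff_adj.mpr hGc)) (by norm_num)
  have hG : G.Adj a b := by
    rw [compl_adj] at hGc; push_neg at hGc; exact hGc hab
  have step : ∀ c : V, ¬(a = c ∨ G.Adj a c) → ¬(b = c ∨ G.Adj b c) → Gᶜ.edist a b ≤ 2 := by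
    intro c hac hbc
    push_neg at hac hbc
    have h1 : Gᶜ.Adj a c := by rw [compl_adj]; exact ⟨hac.1, hac.2⟩
    have h2 : Gᶜ.Adj c b := by rw [compl_adj]; exact ⟨fun h => hbc.1 h.symm, fun h => hbc.2 h.symm⟩
    calc Gᶜ.edist a b ≤ Gᶜ.edist a c + Gᶜ.edist c b := SimpleGraph.edist_triangle
      _ ≤ 1 + 1 := add_le_add (le_of_eq (edist_eq_one_iff_adj.mpr h1))
          (le_of_eq (edist_eq_one_iff_adj.mpr h2))
      _ ≤ 2 := by norm_num
  rcases not_and_or.mp (key a) with hax | hay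
  · rcases not_and_or.mp (key b) with hbx | hby
    · exact step x hax hbx
    · by_cases hay' : (a = y ∨ G.Adj a y)
      · by_cases hbx' : (b = x ∨ G.Adj b x)
        · exfalso
          apply hxy
          calc G.edist x y ≤ G.edist x b + G.edist b y := SimpleGraph.edist_triangle
            _ ≤ G.edist x b + (G.edist b a + G.edist a y) :=
                add_le_add le_rfl SimpleGraph.edist_triangle
            _ ≤ 1 + (1 + 1) := add_le_add (edist_comm ▸ hclose b x hbx')
                (add_le_add (le_of_eq (edist_eq_one_iff_adj.mpr hG.symm)) (hclose a y hay'))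
            _ ≤ 3 := by norm_num
        · exact step x hax hbx'
      · exact step y hay' hby
  · rcases not_and_or.mp (key b) with hbx | hby
    · by_cases hax' : (a = x ∨ G.Adj a x)
      · by_cases hby' : (b = y ∨ G.Adj b y)
        · exfalso
          apply hxy
          calc G.edist x y ≤ G.edist x a + G.edist a y := SimpleGraph.edist_triangle
            _ ≤ G.edist x a + (G.edist a b + G.edist b y) :=
                add_le_add le_rfl SimpleGraph.edist_triangle
            _ ≤ 1 + (1 + 1) := add_le_add (edist_comm ▸ hclose a x hax')
                (add_le_add (le_of_eq (edist_eq_one_iff_adj.mpr hG)) (hclose b y hby'))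
            _ ≤ 3 := by norm_num
        · exact step y hay hby'
      · exact step x hax' hbx
    · exact step y hay hby

theorem stmt6 {V : Type*} [Fintype V] [Nonempty V] (G : SimpleGraph V)
    (h : G.ediam ≠ 3) :
    Fintype.card V ≤ convexityNumber (compPrism G) := by
  classical
  have hcardl : (Set.range (Sum.inl : V → V ⊕ V)).ncard = Fintype.card V := by
    rw [← Set.image_univ, Set.ncard_image_of_injective _ Sum.inl_injective,
      Set.ncard_univ, Nat.card_eq_fintype_card]
  have hcardr : (Set.range (Sum.inr : V → V ⊕ V)).ncard = Fintype.card V := by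
    rw [← Set.image_univ, Set.ncard_image_of_injective _ Sum.inr_injective,
      Set.ncard_univ, Nat.card_eq_fintype_card]
  have hproperl : (Set.range (Sum.inl : V → V ⊕ V)) ≠ Set.univ := by
    intro hEq
    have : (Sum.inr (Classical.arbitrary V) : V ⊕ V) ∈ Set.range Sum.inl := by
      rw [hEq]; trivial
    simp at this
  have hproperr : (Set.range (Sum.inr : V → V ⊕ V)) ≠ Set.univ := by
    intro hEq
    have : (Sum.inl (Classical.arbitrary V) : V ⊕ V) ∈ Set.range Sum.inr := by
      rw [hEq]; trivial
    simp at this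
  have key : ∃ S : Set (V ⊕ V), IsGeodConvex (compPrism G) S ∧ S ≠ Set.univ ∧
      S.ncard = Fintype.card V := by
    by_cases hle : G.ediam ≤ 2
    · exact ⟨Set.range Sum.inl,
        left_convex G (fun a b => le_trans edist_le_ediam hle), hproperl, hcardl⟩
    · have h4 : ¬ G.ediam ≤ 3 := by
        intro h3
        exact h (le_antisymm h3 (by
          have h2 : (2 : ℕ∞) < G.ediam := lt_of_not_ge hle
          exact Order.add_one_le_of_lt h2))
      obtain ⟨x, y, hxy⟩ : ∃ x y : V, ¬ G.edist x y ≤ 3 := by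
        by_contra hc
        push_neg at hc
        exact h4 (ediam_le_of_edist_le hc)
      exact ⟨Set.range Sum.inr,
        right_convex G (compl_edist_le_two G hxy), hproperr, hcardr⟩
  obtain ⟨S, hconv, hproper, hcard⟩ := key
  have hbdd : BddAbove {n | ∃ S : Set (V ⊕ V),
      IsGeodConvex (compPrism G) S ∧ S ≠ Set.univ ∧ S.ncard = n} := by
    refine ⟨Fintype.card (V ⊕ V), ?_⟩
    rintro n ⟨T, _, _, rfl⟩
    calc T.ncard ≤ (Set.univ : Set (V ⊕ V)).ncard :=
          Set.ncard_le_ncard (Set.subset_univ T) Set.finite_univ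
      _ = Fintype.card (V ⊕ V) := by rw [Set.ncard_univ, Nat.card_eq_fintype_card]
  exact le_csSup hbdd ⟨S, hconv, hproper, hcard⟩
end

section
/- Let G be a graph with a vertex v whose corresponding vertex v̄ in the complementary prism G∘Ḡ satisfies: v is an isolated vertex of G. Then v̄ together with all vertices of G∘Ḡ except v forms a convex set; in particular, if G has an isolated vertex then con(G∘Ḡ) = 2n − 1, where n is the order of G. -/
open SimpleGraph

lemma adj_inl_iso {V : Type*} {G : SimpleGraph V} {v : V}
    (hiso : ∀ u : V, ¬G.Adj v u) {x : V ⊕ V}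
    (h : (compPrism G).Adj (Sum.inl v) x) : x = Sum.inr v := by
  rcases x with a | a
  · exact absurd h (hiso a)
  · have : v = a := h
    rw [this]

lemma no_internal {V : Type*} {G : SimpleGraph V} {v : V}
    (hiso : ∀ u : V, ¬G.Adj v u) :
    ∀ {a b : V ⊕ V} (p : (compPrism G).Walk a b), p.IsPath →
      a ≠ Sum.inl v → b ≠ Sum.inl v → Sum.inl v ∉ p.support := by
  intro a b p
  induction p with
  | nil =>
    intro _ ha _ h
    simp only [Walk.support_nil, List.mem_singleton] at h
    exact ha h.symm
  | @cons a c b h q ih =>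
    intro hp ha hb hmem
    rw [Walk.support_cons, List.mem_cons] at hmem
    rcases hmem with h1 | h1
    · exact ha h1.symm
    · by_cases hc : c = Sum.inl v
      · subst hc
        have hav : a = Sum.inr v := adj_inl_iso hiso h.symm
        cases q with
        | nil => exact hb rfl
        | @cons _ d _ h' q' =>
          have hdv : d = Sum.inr v := adj_inl_iso hiso h'
          rw [Walk.cons_isPath_iff] at hp
          apply hp.2
          rw [Walk.support_cons]
          right
          rw [hav, ← hdv]
          exact q'.start_mem_support
      · exact ih hp.of_cons hc hb h1

theorem stmt11 {V : Type*} [Fintype V] (G : SimpleGraph V) (v : V)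
    (hiso : ∀ u : V, ¬G.Adj v u) :
    IsGeodConvex (compPrism G) {x : V ⊕ V | x ≠ Sum.inl v} ∧
      convexityNumber (compPrism G) = 2 * Fintype.card V - 1 := by
  classical
  have hconv : IsGeodConvex (compPrism G) {x : V ⊕ V | x ≠ Sum.inl v} := by
    rintro u hu w hw x ⟨p, hp, _, hx⟩
    intro hxv
    subst hxv
    exact no_internal hiso p hp hu hw hx
  refine ⟨hconv, ?_⟩
  set S : Set (V ⊕ V) := {x : V ⊕ V | x ≠ Sum.inl v} with hS
  have hSeq : S = Set.univ \ {Sum.inl v} := by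
    ext x; simp [hS]
  have hcard : S.ncard = 2 * Fintype.card V - 1 := by
    rw [hSeq, Set.ncard_diff_singleton_of_mem (Set.mem_univ _)]
    rw [Set.ncard_univ, Nat.card_eq_fintype_card, Fintype.card_sum, two_mul]
  have hne : S ≠ Set.univ := by
    intro h
    have : Sum.inl v ∈ S := h ▸ Set.mem_univ _
    exact this rfl
  have hmem : (2 * Fintype.card V - 1) ∈
      {n | ∃ T : Set (V ⊕ V), IsGeodConvex (compPrism G) T ∧ T ≠ Set.univ ∧ T.ncard = n} :=
    ⟨S, hconv, hne, hcard⟩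
  have hub : ∀ m ∈ {n | ∃ T : Set (V ⊕ V), IsGeodConvex (compPrism G) T ∧ T ≠ Set.univ ∧
      T.ncard = n}, m ≤ 2 * Fintype.card V - 1 := by
    rintro m ⟨T, _, hT, rfl⟩
    have hlt : T.ncard < (Set.univ : Set (V ⊕ V)).ncard := by
      apply Set.ncard_lt_ncard (Set.ssubset_univ_iff.mpr hT) (Set.finite_univ)
    rw [Set.ncard_univ, Nat.card_eq_fintype_card, Fintype.card_sum, ← two_mul] at hlt
    omega
  exact le_antisymm (csSup_le ⟨_, hmem⟩ hub) (le_csSup ⟨_, hub⟩ hmem)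
end

section
/- Let G be a disconnected graph with components G₁,…,G_ℓ (ℓ ≥ 2). In the complementary prism G∘Ḡ, for any two vertices u ∈ V(G_i) and v ∈ V(G_j) with i ≠ j, the matched vertices ū and v̄ lie on a shortest (u,v)-path; i.e., ū, v̄ ∈ I[u,v], where I[u,v] is the geodesic interval in G∘Ḡ. -/
open SimpleGraph

lemma aux {V : Type*} (G : SimpleGraph V) (u v : V)
    (h : G.connectedComponentMk u ≠ G.connectedComponentMk v) :
    ∀ p : (compPrism G).Walk (Sum.inl u) (Sum.inl v), 3 ≤ p.length := by
  have hne : u ≠ v := fun e => h (by rw [e])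
  have hnadj : ¬ G.Adj u v := fun a => h (ConnectedComponent.eq.mpr a.reachable)
  intro p
  by_contra hlt
  push_neg at hlt
  interval_cases hl : p.length
  · exact hne (by simpa using Sum.inl_injective (p.eq_of_length_eq_zero hl))
  · have ha := p.adj_getVert_succ (by omega : 0 < p.length)
    rw [p.getVert_zero] at ha
    have := p.getVert_length
    rw [hl] at this
    rw [this] at ha
    exact hnadj ha
  · have ha1 := p.adj_getVert_succ (by omega : 0 < p.length)
    have ha2 := p.adj_getVert_succ (by omega : 1 < p.length)
    rw [p.getVert_zero] at ha1
    have := p.getVert_length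
    rw [hl] at this
    rw [this] at ha2
    rcases hw : p.getVert 1 with a | a <;> rw [hw] at ha1 ha2
    · exact h (ConnectedComponent.eq.mpr ((show G.Adj u a from ha1).reachable.trans (show G.Adj a v from ha2).reachable))
    · exact hne ((show u = a from ha1).trans (show a = v from ha2))

theorem stmt12 {V : Type*} (G : SimpleGraph V) (u v : V)
    (h : G.connectedComponentMk u ≠ G.connectedComponentMk v) :
    inInterval (compPrism G) (Sum.inl u) (Sum.inl v) (Sum.inr u) ∧
      inInterval (compPrism G) (Sum.inl u) (Sum.inl v) (Sum.inr v) := by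
  have hne : u ≠ v := fun e => h (by rw [e])
  have hnadj : ¬ G.Adj u v := fun a => h (ConnectedComponent.eq.mpr a.reachable)
  have h1 : (compPrism G).Adj (Sum.inl u) (Sum.inr u) := rfl
  have h2 : (compPrism G).Adj (Sum.inr u) (Sum.inr v) := by
    show Gᶜ.Adj u v; exact ⟨hne, hnadj⟩
  have h3 : (compPrism G).Adj (Sum.inr v) (Sum.inl v) := rfl
  set p : (compPrism G).Walk (Sum.inl u) (Sum.inl v) :=
    Walk.cons h1 (Walk.cons h2 (Walk.cons h3 Walk.nil)) with hp
  have hpath : p.IsPath := by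
    simp [hp, Walk.isPath_def, hne, hne.symm]
  have hdist : (compPrism G).dist (Sum.inl u) (Sum.inl v) = 3 := by
    have hle : (compPrism G).dist (Sum.inl u) (Sum.inl v) ≤ 3 := by
      simpa [hp] using SimpleGraph.dist_le p
    have hge : 3 ≤ (compPrism G).dist (Sum.inl u) (Sum.inl v) := by
      obtain ⟨q, hq⟩ := p.reachable.exists_walk_length_eq_dist
      rw [← hq]; exact aux G u v h q
    omega
  refine ⟨⟨p, hpath, by simp [hp, hdist], ?_⟩, ⟨p, hpath, by simp [hp, hdist], ?_⟩⟩ <;>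
    simp [hp, Walk.support_cons]
end
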